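/- Let (N,v) be a TU game with veto player a such that the least core value ε* equals ε̂ := min{ (v(N)−v(S))/(|N|−|S|+1) : S proper, a ∈ S }. Let R be the set of minimizers and S_min the intersection of all coalitions in R. Then every allocation x in the least core C_{ε*} satisfies x_i = ε* for every player i ∉ S_min. -/

import Mathlib

open Finset
open scoped Classical

/-- The strong ε-core of a TU game. -/
def epsCore {ι : Type*} [Fintype ι] [DecidableEq ι] (v : Finset ι → ℝ) (ε : ℝ) :
    Set (ι → ℝ) :=
  {x | (∑ i, x i) = v Finset.univ ∧
    ∀ S : Finset ι, S.Nonempty → S ≠ Finset.univ → v S + ε ≤ ∑ i ∈ S, x i}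

/-- The least core value: the largest ε for which the strong ε-core is nonempty. -/
noncomputable def lcv {ι : Type*} [Fintype ι] [DecidableEq ι] (v : Finset ι → ℝ) : ℝ :=
  sSup {ε : ℝ | (epsCore v ε).Nonempty}

/-- The set of proper coalitions containing the player `a`. -/
def Pa {ι : Type*} [Fintype ι] [DecidableEq ι] (a : ι) : Finset (Finset ι) :=
  Finset.univ.filter (fun S => a ∈ S ∧ S ≠ Finset.univ)

/-- The quantity `(v(N) − v(S))/(|N| − |S| + 1)`. -/
noncomputable def excessRatio {ι : Type*} [Fintype ι] [DecidableEq ι]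
    (v : Finset ι → ℝ) (S : Finset ι) : ℝ :=
  (v Finset.univ - v S) / ((Fintype.card ι : ℝ) - (S.card : ℝ) + 1)

/-- Suppose the least core value `ε*` of a veto game equals
`ε̂ = min{(v(N)−v(S))/(|N|−|S|+1) : S proper, a ∈ S}`. Let `R` be the set of
minimizers and `S_min` the intersection of all coalitions in `R`. Then every
allocation in the least core gives exactly `ε*` to every player outside `S_min`. -/
theorem stmt12 {ι : Type*} [Fintype ι] [DecidableEq ι] (v : Finset ι → ℝ) (a : ι)
    (hempty : v ∅ = 0)
    (hveto : ∀ S : Finset ι, a ∉ S → v S = 0)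
    (hPa : (Pa a).Nonempty)
    (hstar : lcv v = (Pa a).inf' hPa (excessRatio v)) :
    ∀ x ∈ epsCore v (lcv v), ∀ i : ι,
      i ∉ ((Pa a).filter
        (fun S => excessRatio v S = (Pa a).inf' hPa (excessRatio v))).inf id →
      x i = lcv v := by
  classical
  intro x hx i hi
  obtain ⟨hsum, hcons⟩ := hx
  set ε := lcv v with hε
  set R := ((Pa a).filter
      (fun S => excessRatio v S = (Pa a).inf' hPa (excessRatio v))) with hRdef
  have hRne : R.Nonempty := by
    obtain ⟨T0, hT0, hT0e⟩ := Finset.exists_mem_eq_inf' hPa (excessRatio v)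
    exact ⟨T0, Finset.mem_filter.mpr ⟨hT0, hT0e.symm⟩⟩
  have hinf : R.inf id = R.inf' hRne id := (Finset.inf'_eq_inf hRne id).symm
  have haR : ∀ S ∈ R, a ∈ S := by
    intro S hS
    have h1 := (Finset.mem_filter.mp hS).1
    exact ((Finset.mem_filter.mp h1).2).1
  have hamem : a ∈ R.inf id := by
    rw [hinf, Finset.mem_inf']
    exact haR
  have hia : i ≠ a := fun h => hi (h ▸ hamem)
  have hex : ¬ ∀ S ∈ R, i ∈ S := by
    intro h
    exact hi (by rw [hinf, Finset.mem_inf']; exact h)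
  push_neg at hex
  obtain ⟨T, hTR, hiT⟩ := hex
  have hTPa := (Finset.mem_filter.mp hTR).1
  have hTexc0 := (Finset.mem_filter.mp hTR).2
  have haT : a ∈ T := ((Finset.mem_filter.mp hTPa).2).1
  have hTuniv : T ≠ Finset.univ := ((Finset.mem_filter.mp hTPa).2).2
  have hTexc : excessRatio v T = ε := by rw [hTexc0, ← hstar]
  set n := Fintype.card ι with hn
  set t := T.card with ht
  have htn : t < n := Finset.card_lt_card (lt_of_le_of_ne (Finset.subset_univ T)
    hTuniv) |>.trans_le (le_of_eq (Finset.card_univ))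
  have hden : (0:ℝ) < (n:ℝ) - t + 1 := by
    have : (t:ℝ) ≤ n := by exact_mod_cast htn.le
    linarith
  have hkey : v Finset.univ - v T = ε * ((n:ℝ) - t + 1) := by
    have := hTexc
    rw [excessRatio] at this
    field_simp at this
    have h2 := (div_eq_iff (ne_of_gt hden)).mp this
    linarith [h2]
  -- lower bound
  have hisingle : ({i} : Finset ι) ≠ Finset.univ := by
    intro h
    have : a ∈ ({i} : Finset ι) := h ▸ Finset.mem_univ a
    exact hia (Finset.mem_singleton.mp this).symm
  have hvi : v {i} = 0 := hveto _ (by simp [Ne.symm hia])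
  have hlow : ε ≤ x i := by
    have h1 := hcons {i} ⟨i, Finset.mem_singleton_self i⟩ hisingle
    rw [hvi, Finset.sum_singleton] at h1
    linarith
  -- upper bound
  have hi' : i ∈ Tᶜ := Finset.mem_compl.mpr hiT
  have hsplit : ∑ j ∈ T, x j + ∑ j ∈ Tᶜ, x j = v Finset.univ := by
    rw [Finset.sum_add_sum_compl]; exact hsum
  have hsplit2 : x i + ∑ j ∈ Tᶜ.erase i, x j = ∑ j ∈ Tᶜ, x j :=
    Finset.add_sum_erase _ x hi'
  have hTcons : v T + ε ≤ ∑ j ∈ T, x j := hcons T ⟨a, haT⟩ hTuniv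
  have heach : ∀ j ∈ Tᶜ.erase i, ε ≤ x j := by
    intro j hj
    have hjT : j ∉ T := Finset.mem_compl.mp (Finset.mem_of_mem_erase hj)
    have hja : j ≠ a := fun h => hjT (h ▸ haT)
    have hjsingle : ({j} : Finset ι) ≠ Finset.univ := by
      intro h
      have : a ∈ ({j} : Finset ι) := h ▸ Finset.mem_univ a
      exact hja (Finset.mem_singleton.mp this).symm
    have h1 := hcons {j} ⟨j, Finset.mem_singleton_self j⟩ hjsingle
    rw [hveto _ (by simp [Ne.symm hja]), Finset.sum_singleton] at h1
    linarith
  have hsumlow : ((Tᶜ.erase i).card : ℝ) * ε ≤ ∑ j ∈ Tᶜ.erase i, x j := by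
    have := Finset.card_nsmul_le_sum (Tᶜ.erase i) x ε heach
    simpa [nsmul_eq_mul] using this
  have hcard : ((Tᶜ.erase i).card : ℝ) = (n:ℝ) - t - 1 := by
    rw [Finset.card_erase_of_mem hi', Finset.card_compl]
    have h1 : t + 1 ≤ n := htn
    push_cast [Nat.sub_sub, ht]
    rw [Nat.cast_sub h1]
    push_cast
    ring
  rw [hcard] at hsumlow
  have hring : ε * ((n:ℝ) - t + 1) = ((n:ℝ) - t - 1) * ε + 2 * ε := by ring
  linarith
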